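/- For every natural number m, the identity ∑_{d=0}^{m} (m − d − ⌈(m−d)/2⌉ + 1)·(2d+2)² = 4·C(m+4, 4) holds, where ⌈·⌉ denotes the ceiling, C(m+4,4) is a binomial coefficient, and m − d − ⌈(m−d)/2⌉ + 1 = ⌊(m−d)/2⌋ + 1. -/
import Mathlib

lemma c2 (n : ℕ) : (n+2).choose 2 * 2 = (n+1)*(n+2) := by
  induction n with
  | zero => decide
  | succ k ih =>
    rw [show k+1+2 = (k+2)+1 from rfl, Nat.choose_succ_succ]
    have : (k+2).choose 1 = k+2 := Nat.choose_one_right _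
    nlinarith [ih]

lemma c3 (n : ℕ) : (n+3).choose 3 * 6 = (n+1)*(n+2)*(n+3) := by
  induction n with
  | zero => decide
  | succ k ih =>
    rw [show k+1+3 = (k+3)+1 from rfl, Nat.choose_succ_succ]
    have h2 := c2 (k+1)
    nlinarith [ih, h2]

lemma c4 (n : ℕ) : (n+4).choose 4 * 24 = (n+1)*(n+2)*(n+3)*(n+4) := by
  induction n with
  | zero => decide
  | succ k ih =>
    rw [show k+1+4 = (k+4)+1 from rfl, Nat.choose_succ_succ]
    have h3 := c3 (k+1)
    nlinarith [ih, h3]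

lemma sqsum (n : ℕ) : (Finset.range n).sum (fun d => (2*d+2)^2) * 3
    = 2*n*(n+1)*(2*n+1) := by
  induction n with
  | zero => simp
  | succ k ih =>
    rw [Finset.sum_range_succ]
    nlinarith [ih]

lemma main : ∀ m : ℕ, (Finset.range (m+1)).sum
    (fun d => ((m - d) / 2 + 1) * (2*d + 2)^2) = 4 * (m+4).choose 4 := by
  intro m
  induction m using Nat.twoStepInduction with
  | zero => decide
  | one => decide
  | more k ih _ =>
    have step : (Finset.range (k+2+1)).sum
        (fun d => ((k+2 - d) / 2 + 1) * (2*d + 2)^2)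
        = (Finset.range (k+1)).sum (fun d => ((k - d) / 2 + 1) * (2*d + 2)^2)
          + (Finset.range (k+3)).sum (fun d => (2*d+2)^2) := by
      rw [Finset.sum_range_succ, Finset.sum_range_succ,
          Finset.sum_range_succ (fun d => (2*d+2)^2),
          Finset.sum_range_succ (fun d => (2*d+2)^2)]
      have hcong : (Finset.range (k+1)).sum (fun d => ((k+2 - d) / 2 + 1) * (2*d + 2)^2)
          = (Finset.range (k+1)).sum
              (fun d => ((k - d) / 2 + 1) * (2*d + 2)^2 + (2*d+2)^2) := by
        apply Finset.sum_congr rfl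
        intro d hd
        simp only [Finset.mem_range] at hd
        have h1 : (k+2-d)/2 = (k-d)/2 + 1 := by omega
        rw [h1]; ring
      rw [hcong, Finset.sum_add_distrib]
      have e1 : (k+2-(k+1))/2 + 1 = 1 := by omega
      have e2 : (k+2-(k+2))/2 + 1 = 1 := by omega
      rw [e1, e2]
      ring
    rw [step, ih]
    have h1 := c4 (k+2)
    have h2 := c4 k
    have h3 := sqsum (k+3)
    nlinarith [h1, h2, h3]

theorem stmt_15 (m : ℕ) :
    (∀ d : ℕ, d ≤ m → m - d - (m - d + 1) / 2 + 1 = (m - d) / 2 + 1) ∧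
    (Finset.range (m+1)).sum
        (fun d => (m - d - (m - d + 1) / 2 + 1) * (2*d + 2)^2) =
      4 * (m+4).choose 4 := by
  constructor
  · intro d hd; omega
  · have hcong : (Finset.range (m+1)).sum
        (fun d => (m - d - (m - d + 1) / 2 + 1) * (2*d + 2)^2)
        = (Finset.range (m+1)).sum (fun d => ((m - d) / 2 + 1) * (2*d + 2)^2) := by
      apply Finset.sum_congr rfl
      intro d hd
      simp only [Finset.mem_range] at hd
      have : m - d - (m - d + 1) / 2 + 1 = (m - d) / 2 + 1 := by omega
      rw [this]
    rw [hcong]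
    exact main m
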